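/- The Peregrine breather A_PR(ξ,τ) = e^{2iτ} ( 4(1 + 4iτ)/(1 + 16τ² + 4ξ²) - 1 ) satisfies the temporal NLSE i ∂_τ A + ∂_ξ² A + 2|A|² A = 0 (i.e., with β₁ = 1 and γ₁ = 2). -/

import Mathlib

open Real Complex


private lemma hx' (τ : ℝ) : HasDerivAt (fun t : ℝ => (t : ℂ)) 1 τ := by
  exact Complex.ofRealCLM.hasDerivAt (x := τ)

private lemma hDne (ξ τ : ℝ) : (1 + 16 * (τ:ℂ)^2 + 4 * (ξ:ℂ)^2) ≠ 0 := by
  have h : (1 + 16 * (τ:ℂ)^2 + 4 * (ξ:ℂ)^2) = ((1 + 16*τ^2 + 4*ξ^2 : ℝ) : ℂ) := by push_cast; ring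
  rw [h, Complex.ofReal_ne_zero]; positivity

private lemma dtau (ξ τ : ℝ) :
    HasDerivAt (fun t : ℝ => Complex.exp (2 * Complex.I * (t : ℂ)) *
      (4 * (1 + 4 * Complex.I * (t : ℂ)) / (1 + 16 * (t : ℂ) ^ 2 + 4 * (ξ : ℂ) ^ 2) - 1))
      (2 * Complex.I * Complex.exp (2 * Complex.I * (τ : ℂ)) *
        (4 * (1 + 4 * Complex.I * (τ : ℂ)) / (1 + 16 * (τ : ℂ) ^ 2 + 4 * (ξ : ℂ) ^ 2) - 1)
       + Complex.exp (2 * Complex.I * (τ : ℂ)) *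
        ((16 * Complex.I * (1 + 16 * (τ : ℂ) ^ 2 + 4 * (ξ : ℂ) ^ 2)
          - 4 * (1 + 4 * Complex.I * (τ : ℂ)) * (32 * (τ:ℂ)))
          / (1 + 16 * (τ : ℂ) ^ 2 + 4 * (ξ : ℂ) ^ 2) ^ 2)) τ := by
  have hx := hx' τ
  have he : HasDerivAt (fun t : ℝ => Complex.exp (2 * Complex.I * (t:ℂ)))
      (2 * Complex.I * Complex.exp (2 * Complex.I * (τ:ℂ))) τ := by
    have := (hx.const_mul (2 * Complex.I)).cexp
    simpa [mul_comm] using this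
  have hn : HasDerivAt (fun t : ℝ => 4 * (1 + 4 * Complex.I * (t:ℂ))) (16 * Complex.I) τ := by
    have := (((hx.const_mul (4 * Complex.I)).const_add 1).const_mul 4)
    convert this using 1
    · rfl
    · ring
  have hd : HasDerivAt (fun t : ℝ => 1 + 16 * (t:ℂ)^2 + 4 * (ξ:ℂ)^2) (32 * (τ:ℂ)) τ := by
    have := (((hx.mul hx).const_mul 16).const_add 1).add_const (4 * (ξ:ℂ)^2)
    convert this using 1
    · rfl
    · funext t; simp only [Pi.mul_apply]; ring
    · ring
  have hq := (hn.div hd (hDne ξ τ)).sub_const 1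
  have := he.mul hq
  convert this using 1
  · rfl
  · rfl
  · rfl

private lemma dxi1 (ξ τ : ℝ) :
    HasDerivAt (fun x : ℝ => Complex.exp (2 * Complex.I * (τ : ℂ)) *
      (4 * (1 + 4 * Complex.I * (τ : ℂ)) / (1 + 16 * (τ : ℂ) ^ 2 + 4 * (x : ℂ) ^ 2) - 1))
      (Complex.exp (2 * Complex.I * (τ : ℂ)) *
        (-(32 * (1 + 4 * Complex.I * (τ : ℂ)) * (ξ:ℂ))
          / (1 + 16 * (τ : ℂ) ^ 2 + 4 * (ξ : ℂ) ^ 2) ^ 2)) ξ := by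
  have hx := hx' ξ
  have hd : HasDerivAt (fun x : ℝ => 1 + 16 * (τ:ℂ)^2 + 4 * (x:ℂ)^2) (8 * (ξ:ℂ)) ξ := by
    have := ((hx.mul hx).const_mul 4).const_add (1 + 16 * (τ:ℂ)^2)
    convert this using 1
    · rfl
    · funext x; simp only [Pi.mul_apply]; ring
    · ring
  have hq := ((hasDerivAt_const ξ (4 * (1 + 4 * Complex.I * (τ:ℂ)))).div hd (hDne ξ τ)).sub_const 1
  have := hq.const_mul (Complex.exp (2 * Complex.I * (τ:ℂ)))
  convert this using 1
  · rfl
  · rfl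
  · ring

private lemma dxi2 (ξ τ : ℝ) :
    HasDerivAt (fun x : ℝ => Complex.exp (2 * Complex.I * (τ : ℂ)) *
      (-(32 * (1 + 4 * Complex.I * (τ : ℂ)) * (x:ℂ))
          / (1 + 16 * (τ : ℂ) ^ 2 + 4 * (x : ℂ) ^ 2) ^ 2))
      (Complex.exp (2 * Complex.I * (τ : ℂ)) *
        (-(32 * (1 + 4 * Complex.I * (τ : ℂ))) *
          (1 + 16 * (τ : ℂ) ^ 2 - 12 * (ξ:ℂ)^2)
          / (1 + 16 * (τ : ℂ) ^ 2 + 4 * (ξ : ℂ) ^ 2) ^ 3)) ξ := by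
  have hx := hx' ξ
  have hd : HasDerivAt (fun x : ℝ => 1 + 16 * (τ:ℂ)^2 + 4 * (x:ℂ)^2) (8 * (ξ:ℂ)) ξ := by
    have := ((hx.mul hx).const_mul 4).const_add (1 + 16 * (τ:ℂ)^2)
    convert this using 1
    · rfl
    · funext x; simp only [Pi.mul_apply]; ring
    · ring
  have hd2 : HasDerivAt (fun x : ℝ => (1 + 16 * (τ:ℂ)^2 + 4 * (x:ℂ)^2)^2)
      (2 * (1 + 16 * (τ:ℂ)^2 + 4 * (ξ:ℂ)^2) * (8 * (ξ:ℂ))) ξ := by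
    have := hd.mul hd
    convert this using 1
    · rfl
    · funext x; simp only [Pi.mul_apply]; ring
    · ring
  have hn : HasDerivAt (fun x : ℝ => -(32 * (1 + 4 * Complex.I * (τ:ℂ)) * (x:ℂ)))
      (-(32 * (1 + 4 * Complex.I * (τ:ℂ)))) ξ := by
    have := (hx.const_mul (32 * (1 + 4 * Complex.I * (τ:ℂ)))).neg
    convert this using 1
    · rfl
    · funext x; simp only [Pi.neg_apply]
    · ring
  have hq := (hn.div hd2 (pow_ne_zero 2 (hDne ξ τ))).const_mul
      (Complex.exp (2 * Complex.I * (τ:ℂ)))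
  convert hq using 1
  · rfl
  · rfl
  have hD := hDne ξ τ
  field_simp
  ring

set_option maxHeartbeats 1000000

/-- The Peregrine breather `A(ξ,τ) = e^{2iτ}(4(1+4iτ)/(1+16τ²+4ξ²) - 1)` satisfies
the temporal NLSE `i ∂_τ A + ∂_ξ² A + 2|A|² A = 0`. -/
theorem stmt_8 (A : ℝ → ℝ → ℂ)
    (hA : ∀ ξ τ : ℝ, A ξ τ = Complex.exp (2 * Complex.I * (τ : ℂ)) *
      (4 * (1 + 4 * Complex.I * (τ : ℂ)) / (1 + 16 * (τ : ℂ) ^ 2 + 4 * (ξ : ℂ) ^ 2) - 1)) :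
    ∀ ξ τ : ℝ,
      Complex.I * deriv (fun t : ℝ => A ξ t) τ +
        iteratedDeriv 2 (fun x : ℝ => A x τ) ξ +
        2 * (↑(‖A ξ τ‖) : ℂ) ^ 2 * A ξ τ = 0 := by
  intro ξ τ
  have h1 : deriv (fun t : ℝ => A ξ t) τ =
      (2 * Complex.I * Complex.exp (2 * Complex.I * (τ : ℂ)) *
        (4 * (1 + 4 * Complex.I * (τ : ℂ)) / (1 + 16 * (τ : ℂ) ^ 2 + 4 * (ξ : ℂ) ^ 2) - 1)
       + Complex.exp (2 * Complex.I * (τ : ℂ)) *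
        ((16 * Complex.I * (1 + 16 * (τ : ℂ) ^ 2 + 4 * (ξ : ℂ) ^ 2)
          - 4 * (1 + 4 * Complex.I * (τ : ℂ)) * (32 * (τ:ℂ)))
          / (1 + 16 * (τ : ℂ) ^ 2 + 4 * (ξ : ℂ) ^ 2) ^ 2)) := by
    have hfun : (fun t : ℝ => A ξ t) = fun t : ℝ => Complex.exp (2 * Complex.I * (t : ℂ)) *
        (4 * (1 + 4 * Complex.I * (t : ℂ)) / (1 + 16 * (t : ℂ) ^ 2 + 4 * (ξ : ℂ) ^ 2) - 1) :=
      funext fun t => hA ξ t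
    rw [hfun]; exact (dtau ξ τ).deriv
  have h2 : iteratedDeriv 2 (fun x : ℝ => A x τ) ξ =
      (Complex.exp (2 * Complex.I * (τ : ℂ)) *
        (-(32 * (1 + 4 * Complex.I * (τ : ℂ))) *
          (1 + 16 * (τ : ℂ) ^ 2 - 12 * (ξ:ℂ)^2)
          / (1 + 16 * (τ : ℂ) ^ 2 + 4 * (ξ : ℂ) ^ 2) ^ 3)) := by
    have hfun : (fun x : ℝ => A x τ) = fun x : ℝ => Complex.exp (2 * Complex.I * (τ : ℂ)) *
        (4 * (1 + 4 * Complex.I * (τ : ℂ)) / (1 + 16 * (τ : ℂ) ^ 2 + 4 * (x : ℂ) ^ 2) - 1) :=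
      funext fun x => hA x τ
    rw [iteratedDeriv_succ, iteratedDeriv_one, hfun]
    have hderiv : deriv (fun x : ℝ => Complex.exp (2 * Complex.I * (τ : ℂ)) *
        (4 * (1 + 4 * Complex.I * (τ : ℂ)) / (1 + 16 * (τ : ℂ) ^ 2 + 4 * (x : ℂ) ^ 2) - 1))
        = fun x : ℝ => Complex.exp (2 * Complex.I * (τ : ℂ)) *
          (-(32 * (1 + 4 * Complex.I * (τ : ℂ)) * (x:ℂ))
            / (1 + 16 * (τ : ℂ) ^ 2 + 4 * (x : ℂ) ^ 2) ^ 2) :=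
      funext fun x => (dxi1 x τ).deriv
    rw [hderiv]
    exact (dxi2 ξ τ).deriv
  have habs : ((‖A ξ τ‖) : ℂ)^2 = A ξ τ * (starRingEnd ℂ) (A ξ τ) := by
    rw [← Complex.ofReal_pow, Complex.sq_norm]
    exact (Complex.mul_conj _).symm
  have hce : (starRingEnd ℂ) (Complex.exp (2 * Complex.I * (τ : ℂ)))
      = (Complex.exp (2 * Complex.I * (τ : ℂ)))⁻¹ := by
    rw [← Complex.exp_conj, ← Complex.exp_neg]
    congr 1
    rw [map_mul, map_mul, Complex.conj_I, Complex.conj_ofReal, map_ofNat]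
    ring
  have hcw : (starRingEnd ℂ) (4 * (1 + 4 * Complex.I * (τ : ℂ)) /
        (1 + 16 * (τ : ℂ) ^ 2 + 4 * (ξ : ℂ) ^ 2) - 1)
      = 4 * (1 - 4 * Complex.I * (τ : ℂ)) /
        (1 + 16 * (τ : ℂ) ^ 2 + 4 * (ξ : ℂ) ^ 2) - 1 := by
    simp [map_sub, map_div₀, map_mul, map_add, map_one, map_ofNat, map_pow,
      Complex.conj_I, Complex.conj_ofReal]
    ring
  rw [h1, h2, habs, hA ξ τ, map_mul, hce, hcw]
  have hD := hDne ξ τ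
  have hE := Complex.exp_ne_zero (2 * Complex.I * (τ : ℂ))
  have hI2 : Complex.I ^ 2 = -1 := Complex.I_sq
  have hI3 : Complex.I ^ 3 = -Complex.I := by rw [pow_succ, hI2]; ring
  have hI4 : Complex.I ^ 4 = 1 := by rw [pow_succ, hI3]; simp
  generalize hDdef : (1 + 16 * (τ:ℂ)^2 + 4*(ξ:ℂ)^2) = D at hD ⊢
  field_simp
  subst hDdef
  ring_nf
  simp only [hI2, hI3, hI4]
  ring
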